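/- Let T be a square-tiled interval exchange transformation with α irrational and with (p_l,p_r) acting transitively (so T is minimal). If α has unbounded partial quotients, then the measure-preserving system (X,T,μ) is rigid. -/

import Mathlib

open MeasureTheory Filter Set
open scoped ENNReal

/-- The square-tiled interval exchange transformation `T = T_α` on
`X = [0,1) × {1,…,d}` (modelled as `ℝ × Fin d`, concentrating on `[0,1) × Fin d`):
`T(x,i) = ({x+α}, p_l i)` if `x ∈ [0,1−α)` and `T(x,i) = ({x+α}, p_r i)` if `x ∈ [1−α,1)`. -/
noncomputable def sqT (d : ℕ) (α : ℝ) (pl pr : Equiv.Perm (Fin d)) (z : ℝ × Fin d) :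
    ℝ × Fin d :=
  (Int.fract (z.1 + α), if Int.fract z.1 < 1 - α then pl z.2 else pr z.2)

/-- The invariant probability measure `μ = (1/d)·(Lebesgue on [0,1) × counting)`. -/
noncomputable def muX (d : ℕ) : Measure (ℝ × Fin d) :=
  ((d : ℝ≥0∞))⁻¹ • ((volume.restrict (Set.Ico (0 : ℝ) 1)).prod Measure.count)

/-- The `(k+1)`-st partial quotient of `α ∈ (0,1)`, obtained by iterating the Gauss map
`x ↦ {1/x}`: for irrational `α = [0; a_1, a_2, …]` one has `pq α k = a_{k+1}`. -/
noncomputable def pq (α : ℝ) (k : ℕ) : ℤ :=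
  ⌊((fun x : ℝ => Int.fract x⁻¹)^[k] α)⁻¹⌋

/-- `α` has bounded partial quotients. -/
def BoundedPQ (α : ℝ) : Prop :=
  ∃ B : ℤ, ∀ k : ℕ, pq α k ≤ B

/-- A measure-preserving system `(Y,S,ν)` is rigid if there is a sequence `q_n → ∞`
with `ν(S^{q_n}A Δ A) → 0` for every measurable set `A`. -/
def Rigid {Y : Type*} [MeasurableSpace Y] (ν : Measure Y) (S : Y → Y) : Prop :=
  ∃ q : ℕ → ℕ, Tendsto q atTop atTop ∧
    ∀ A : Set Y, MeasurableSet A →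
      Tendsto (fun n => ν (symmDiff ((S^[q n]) ⁻¹' A) A)) atTop (nhds 0)


set_option linter.dupNamespace false
open scoped symmDiff

noncomputable section
namespace STIE


abbrev pc (x : ℝ) : UnitAddCircle := (x : UnitAddCircle)

lemma coe_int_eq_zero (n : ℤ) : pc (n : ℝ) = 0 := by
  rw [AddCircle.coe_eq_zero_iff]
  exact ⟨n, by simp⟩

lemma pc_add (x y : ℝ) : pc (x + y) = pc x + pc y := rfl

lemma pc_fract (x : ℝ) : pc (Int.fract x) = pc x := by
  have h : Int.fract x = x + ((-⌊x⌋ : ℤ) : ℝ) := by rw [Int.fract]; push_cast; ring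
  rw [h, pc_add, coe_int_eq_zero, add_zero]

lemma pc_inj {x y : ℝ} (hx : x ∈ Ico (0:ℝ) 1) (hy : y ∈ Ico (0:ℝ) 1) :
    pc x = pc y ↔ x = y :=
  AddCircle.coe_eq_coe_iff_of_mem_Ico (p := 1) (a := 0) (by rwa [zero_add]) (by rwa [zero_add])

lemma mem_img {A : Set ℝ} {y : ℝ} (hy : y ∈ Ico (0:ℝ) 1) :
    pc y ∈ pc '' (A ∩ Ico 0 1) ↔ y ∈ A := by
  constructor
  · rintro ⟨a, ha, hay⟩
    rw [← (pc_inj ha.2 hy).mp hay]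
    exact ha.1
  · intro hyA
    exact ⟨y, ⟨hyA, hy⟩, rfl⟩

lemma measure_singleton_circle (z : UnitAddCircle) : (volume : Measure UnitAddCircle) {z} = 0 := by
  have h := AddCircle.add_projection_respects_measure (T := 1) 0 (measurableSet_singleton z)
  rw [h]
  have hsub : (QuotientAddGroup.mk ⁻¹' {z}) ∩ Ioc (0:ℝ) (0+1) ⊆ {((AddCircle.equivIoc 1 0 z : Ioc (0:ℝ) (0+1)) : ℝ)} := by
    intro y ⟨hy1, hy2⟩
    have hyz : (y : UnitAddCircle) = z := hy1
    have : AddCircle.equivIoc 1 0 ((y : ℝ) : UnitAddCircle) = ⟨y, hy2⟩ := by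
      rw [Equiv.apply_eq_iff_eq_symm_apply]; rfl
    rw [hyz] at this
    simp [this]
  exact measure_mono_null hsub (measure_singleton _)

lemma nullmeas_img {A : Set ℝ} (hA : MeasurableSet A) :
    NullMeasurableSet (pc '' (A ∩ Ico 0 1)) volume := by
  let e := AddCircle.measurableEquivIoc 1 0
  have hs₁ : MeasurableSet (⇑e ⁻¹' (Subtype.val ⁻¹' (A ∩ Ioo 0 1))) :=
    e.measurable (measurable_subtype_coe (hA.inter measurableSet_Ioo))
  have him : pc '' (A ∩ Ioo 0 1) = ⇑e ⁻¹' (Subtype.val ⁻¹' (A ∩ Ioo 0 1)) := by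
    ext z
    constructor
    · rintro ⟨y, hy, rfl⟩
      have hy' : y ∈ Ioc (0:ℝ) (0+1) := by
        rw [zero_add]; exact Ioo_subset_Ioc_self hy.2
      have he : AddCircle.equivIoc 1 0 ((y:ℝ) : UnitAddCircle) = ⟨y, hy'⟩ := by
        rw [Equiv.apply_eq_iff_eq_symm_apply]; rfl
      show (e (pc y) : ℝ) ∈ A ∩ Ioo 0 1
      have : e (pc y) = ⟨y, hy'⟩ := he
      rw [this]
      exact hy
    · intro hz
      refine ⟨(e z : ℝ), hz, ?_⟩
      show ((e z : ℝ) : UnitAddCircle) = z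
      exact (AddCircle.equivIoc 1 0).symm_apply_apply z
  have hnull : (volume : Measure UnitAddCircle) ((pc '' (A ∩ Ico 0 1)) ∆ (pc '' (A ∩ Ioo 0 1))) = 0 := by
    refine measure_mono_null ?_ (measure_singleton_circle (pc 0))
    have hsub2 : pc '' (A ∩ Ioo 0 1) ⊆ pc '' (A ∩ Ico 0 1) :=
      image_mono (inter_subset_inter_right _ Ioo_subset_Ico_self)
    rw [symmDiff_of_ge hsub2]
    intro z hz
    obtain ⟨⟨y, hy, rfl⟩, hz2⟩ := hz
    have hy0 : y = 0 := by
      rcases hy.2.1.lt_or_eq with h | h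
      · exact absurd (⟨y, ⟨hy.1, h, hy.2.2⟩, rfl⟩ : pc y ∈ pc '' (A ∩ Ioo 0 1)) hz2
      · exact h.symm
    simp [hy0]
  have hae : pc '' (A ∩ Ioo 0 1) =ᵐ[volume] pc '' (A ∩ Ico 0 1) := by
    rw [← measure_symmDiff_eq_zero_iff, symmDiff_comm]
    exact hnull
  exact (hs₁.nullMeasurableSet.congr (him ▸ hae : _)).mono_ac (le_refl _).absolutelyContinuous

lemma restrict_preimage_pc (s : Set UnitAddCircle) (hs : NullMeasurableSet s volume) :
    (volume.restrict (Ico (0:ℝ) 1)) (pc ⁻¹' s) = volume s := by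
  have h1 : volume.restrict (Ico (0:ℝ) 1) = volume.restrict (Ioc (0:ℝ) 1) :=
    Measure.restrict_congr_set Ico_ae_eq_Ioc
  have h2 : (Ioc (0:ℝ) 1) = Ioc (0:ℝ) (0+1) := by norm_num
  rw [h1, h2]
  exact (AddCircle.measurePreserving_mk 1 0).measure_preimage hs

lemma rot_preimage (A : Set ℝ) (t : ℝ) :
    {x : ℝ | Int.fract (x + t) ∈ A} =
      pc ⁻¹' ((fun z => z + pc t) ⁻¹' (pc '' (A ∩ Ico 0 1))) := by
  ext x
  simp only [mem_setOf_eq, mem_preimage]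
  have h1 : pc x + pc t = pc (Int.fract (x + t)) := by rw [← pc_add, pc_fract]
  rw [h1, mem_img ⟨Int.fract_nonneg _, Int.fract_lt_one _⟩]




lemma rot_tendsto {ι : Type*} {l : Filter ι} (A : Set ℝ) (hA : MeasurableSet A) (t : ι → ℝ)
    (ht : Tendsto (fun n => pc (t n)) l (nhds 0)) :
    Tendsto (fun n => (volume.restrict (Ico (0:ℝ) 1)) (({x | Int.fract (x + t n) ∈ A}) ∆ A))
      l (nhds 0) := by
  set s := pc '' (A ∩ Ico 0 1) with hs_def
  have hs : NullMeasurableSet s volume := nullmeas_img hA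
  set F : C(UnitAddCircle, C(UnitAddCircle, UnitAddCircle)) :=
    ContinuousMap.curry ⟨fun p => p.2 + p.1, by continuity⟩ with hF_def
  have hFc : ∀ c : UnitAddCircle, ⇑(F c) = fun z => z + c := by
    intro c; ext z; simp [hF_def]
  have hg : MeasurePreserving (⇑(F 0)) (volume : Measure UnitAddCircle) volume := by
    rw [hFc]
    exact measurePreserving_add_right volume 0
  have key := tendsto_measure_symmDiff_preimage_nhds_zero
    (μ := (volume : Measure UnitAddCircle)) (ν := (volume : Measure UnitAddCircle))
    (f := fun n => F (pc (t n))) (g := F 0) (s := s)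
    ((F.continuous.tendsto 0).comp ht)
    (Eventually.of_forall fun n => by
      rw [hFc]; exact measurePreserving_add_right volume (pc (t n)))
    hg hs (measure_ne_top _ _)
  have hgs : ⇑(F 0) ⁻¹' s = s := by
    rw [hFc]; ext z; simp
  have heq : ∀ n, (volume.restrict (Ico (0:ℝ) 1)) (({x | Int.fract (x + t n) ∈ A}) ∆ A)
      = volume ((⇑(F (pc (t n))) ⁻¹' s) ∆ (⇑(F 0) ⁻¹' s)) := by
    intro n
    rw [hgs]
    have h1 : {x : ℝ | Int.fract (x + t n) ∈ A} = pc ⁻¹' (⇑(F (pc (t n))) ⁻¹' s) := by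
      rw [hFc]; exact rot_preimage A (t n)
    have h2 : (({x : ℝ | Int.fract (x + t n) ∈ A}) ∆ A) ∩ Ico 0 1
        = pc ⁻¹' ((⇑(F (pc (t n))) ⁻¹' s) ∆ s) ∩ Ico 0 1 := by
      rw [h1]
      ext x
      by_cases hx : x ∈ Ico (0:ℝ) 1
      · simp only [mem_inter_iff, hx, and_true, mem_symmDiff, mem_preimage]
        rw [mem_img hx]
      · simp [hx]
    rw [Measure.restrict_apply' measurableSet_Ico, h2,
      ← Measure.restrict_apply' measurableSet_Ico]
    refine restrict_preimage_pc _ ?_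
    exact (hs.preimage (measurePreserving_add_right volume (pc (t n))).quasiMeasurePreserving
      |>.mono_ac (le_refl _).absolutelyContinuous).symmDiff hs
  rw [show (fun n => (volume.restrict (Ico (0:ℝ) 1)) (({x | Int.fract (x + t n) ∈ A}) ∆ A))
    = (fun n => volume ((⇑(F (pc (t n))) ⁻¹' s) ∆ (⇑(F 0) ⁻¹' s))) from funext heq]
  exact key

/-- the step permutation -/
def stepP {d : ℕ} (α : ℝ) (pl pr : Equiv.Perm (Fin d)) (y : ℝ) : Equiv.Perm (Fin d) :=
  if Int.fract y < 1 - α then pl else pr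

lemma step_bad_bound {d : ℕ} (α : ℝ) (pl pr : Equiv.Perm (Fin d)) (c t τ : ℝ) (N : ℤ)
    (hτ : 0 ≤ τ) (ht : |t - N| ≤ τ) :
    volume.restrict (Ico (0:ℝ) 1) {x | stepP α pl pr (x + c + t) ≠ stepP α pl pr (x + c)}
      ≤ ENNReal.ofReal (4 * τ) := by
  set c₀ : ℝ := 1 - α with hc₀
  set B : Set ℝ := (Icc 0 τ ∪ Ico (1-τ) 1) ∪ Icc (c₀-τ) (c₀+τ) with hB
  have habs := abs_le.mp ht
  -- step 1: inclusion
  have hsub : {x : ℝ | stepP α pl pr (x + c + t) ≠ stepP α pl pr (x + c)}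
      ⊆ {x : ℝ | Int.fract (x + c) ∈ B} := by
    intro x hx
    by_contra hB'
    simp only [mem_setOf_eq] at hB' hx
    set u : ℝ := Int.fract (x + c) with hu
    have hu0 : 0 ≤ u := Int.fract_nonneg _
    have hu1 : u < 1 := Int.fract_lt_one _
    simp only [hB, mem_union, mem_Icc, mem_Ico, not_or, not_and, not_le, not_lt] at hB'
    obtain ⟨⟨h1, h2⟩, h3⟩ := hB'
    have hτu : τ < u := h1 hu0
    have hu1τ : u < 1 - τ := by
      by_contra hcon
      exact absurd hu1 (not_lt.mpr (h2 (not_lt.mp hcon)))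
    -- fract (x+c+t) = u + (t - N)
    have hfr : Int.fract (x + c + t) = u + (t - N) := by
      have e1 : x + c + t = (u + (t - N) + ⌊x+c⌋) + N := by
        rw [hu, Int.fract]; push_cast; ring
      rw [e1, Int.fract_add_intCast, Int.fract_add_intCast]
      exact Int.fract_eq_self.mpr ⟨by linarith, by linarith⟩
    have hiff : (Int.fract (x + c + t) < c₀) ↔ (u < c₀) := by
      rw [hfr]
      rcases lt_or_ge u c₀ with hlt | hge
      · have hstrict : u < c₀ - τ := by
          by_contra hcon
          exact absurd (h3 (le_of_not_gt hcon)) (by linarith)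
        constructor <;> intro <;> [exact hlt; linarith [habs.1, habs.2]]
      · have h4 : c₀ + τ < u := h3 (by linarith)
        constructor <;> intro h' <;> linarith [habs.1, habs.2]
    apply hx
    unfold stepP
    rw [hc₀] at hiff
    rw [if_congr (hu ▸ hiff) rfl rfl]
  refine le_trans (measure_mono hsub) ?_
  -- step 2: measure computation
  have hBmeas : MeasurableSet B :=
    ((measurableSet_Icc.union measurableSet_Ico).union measurableSet_Icc)
  have h1 : {x : ℝ | Int.fract (x + c) ∈ B}
      = pc ⁻¹' ((fun z => z + pc c) ⁻¹' (pc '' (B ∩ Ico 0 1))) := rot_preimage B c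
  have h2 : volume.restrict (Ico (0:ℝ) 1) {x | Int.fract (x + c) ∈ B}
      = volume (pc '' (B ∩ Ico 0 1)) := by
    rw [h1, restrict_preimage_pc _ ((nullmeas_img hBmeas).preimage
      (measurePreserving_add_right volume (pc c)).quasiMeasurePreserving)]
    exact (measurePreserving_add_right volume (pc c)).measure_preimage (nullmeas_img hBmeas)
  have h3 : volume (pc '' (B ∩ Ico 0 1)) = volume (B ∩ Ico (0:ℝ) 1) := by
    rw [← restrict_preimage_pc _ (nullmeas_img hBmeas),
      Measure.restrict_apply' measurableSet_Ico]
    congr 1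
    ext x
    by_cases hx : x ∈ Ico (0:ℝ) 1
    · simp only [mem_inter_iff, hx, and_true, mem_preimage]
      rw [mem_img hx]
    · simp [hx]
  rw [h2, h3]
  have : volume (B ∩ Ico (0:ℝ) 1) ≤ volume (Icc (0:ℝ) τ) + volume (Ico (1-τ) (1:ℝ))
      + volume (Icc (c₀-τ) (c₀+τ)) := by
    refine le_trans (measure_mono inter_subset_left) ?_
    refine le_trans (measure_union_le _ _) ?_
    exact add_le_add_left (measure_union_le _ _) _
  refine le_trans this ?_
  rw [Real.volume_Icc, Real.volume_Ico, Real.volume_Icc]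
  rw [← ENNReal.ofReal_add (by linarith) (by linarith), ← ENNReal.ofReal_add (by linarith) (by linarith)]
  apply ENNReal.ofReal_le_ofReal
  linarith



def betaSeq (α : ℝ) (k : ℕ) : ℝ := (fun x : ℝ => Int.fract x⁻¹)^[k] α

lemma pq_eq (α : ℝ) (k : ℕ) : pq α k = ⌊(betaSeq α k)⁻¹⌋ := rfl

def cfQ (α : ℝ) : ℕ → ℤ
  | 0 => 0
  | 1 => 1
  | (k+2) => pq α k * cfQ α (k+1) + cfQ α k

def cfP (α : ℝ) : ℕ → ℤ
  | 0 => 1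
  | 1 => 0
  | (k+2) => pq α k * cfP α (k+1) + cfP α k

def cfD (α : ℝ) (k : ℕ) : ℝ := ∏ j ∈ Finset.range k, betaSeq α j

variable {α : ℝ}

lemma beta_props (hirr : Irrational α) (h0 : 0 < α) (h1 : α < 1) : ∀ k, Irrational (betaSeq α k) ∧ 0 < betaSeq α k ∧ betaSeq α k < 1 := by
  intro k
  induction k with
  | zero => exact ⟨hirr, h0, h1⟩
  | succ k ih =>
    obtain ⟨hi, hp, hl⟩ := ih
    have hev : betaSeq α (k+1) = Int.fract (betaSeq α k)⁻¹ := by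
      rw [betaSeq, Function.iterate_succ_apply']; rfl
    have hinv : Irrational (betaSeq α k)⁻¹ := hi.inv
    have hfr : Irrational (Int.fract (betaSeq α k)⁻¹) := by
      rw [Int.fract]
      exact hinv.sub_intCast _
    refine ⟨hev ▸ hfr, ?_, ?_⟩
    · rw [hev]
      rcases (Int.fract_nonneg (betaSeq α k)⁻¹).lt_or_eq with h | h
      · exact h
      · exact absurd h.symm (by simpa using hfr.ne_int 0)
    · rw [hev]; exact Int.fract_lt_one _

lemma beta_rec (k : ℕ) : betaSeq α (k+1) = (betaSeq α k)⁻¹ - pq α k := by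
  rw [betaSeq, Function.iterate_succ_apply', pq_eq, Int.fract]
  rfl

lemma pq_ge_one (hirr : Irrational α) (h0 : 0 < α) (h1 : α < 1) (k : ℕ) : 1 ≤ pq α k := by
  obtain ⟨_, hp, hl⟩ := beta_props hirr h0 h1 k
  rw [pq_eq, Int.le_floor]
  push_cast
  rw [le_inv_comm₀ one_pos hp, inv_one]
  exact hl.le

lemma cfD_zero : cfD α 0 = 1 := by simp [cfD]

lemma cfD_succ (k : ℕ) : cfD α (k+1) = cfD α k * betaSeq α k := by
  rw [cfD, cfD, Finset.prod_range_succ]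

lemma cfD_pos (hirr : Irrational α) (h0 : 0 < α) (h1 : α < 1) : ∀ k, 0 < cfD α k := by
  intro k
  induction k with
  | zero => simp [cfD_zero]
  | succ k ih => rw [cfD_succ]; exact mul_pos ih (beta_props hirr h0 h1 k).2.1

lemma cfD_rec (hirr : Irrational α) (h0 : 0 < α) (h1 : α < 1) (k : ℕ) : cfD α (k+2) = cfD α k - pq α k * cfD α (k+1) := by
  have hb := (beta_props hirr h0 h1 k).2.1
  have h2 : cfD α (k+2) = cfD α (k+1) * betaSeq α (k+1) := cfD_succ _
  have h1' : cfD α (k+1) = cfD α k * betaSeq α k := cfD_succ _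
  rw [h2, h1', beta_rec]
  field_simp

lemma cfE (hirr : Irrational α) (h0 : 0 < α) (h1 : α < 1) (k : ℕ) : (cfQ α k : ℝ) * α - cfP α k = (-1 : ℝ)^(k+1) * cfD α k := by
  induction k using Nat.twoStepInduction with
  | zero => simp [cfQ, cfP, cfD_zero]
  | one =>
    simp only [cfQ, cfP, cfD_succ, cfD_zero]
    have : betaSeq α 0 = α := rfl
    rw [this]
    push_cast
    ring
  | more k ih1 ih2 =>
    have hrecQ : (cfQ α (k+2) : ℝ) = pq α k * cfQ α (k+1) + cfQ α k := by
      rw [show cfQ α (k+2) = pq α k * cfQ α (k+1) + cfQ α k from rfl]; push_cast; ring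
    have hrecP : (cfP α (k+2) : ℝ) = pq α k * cfP α (k+1) + cfP α k := by
      rw [show cfP α (k+2) = pq α k * cfP α (k+1) + cfP α k from rfl]; push_cast; ring
    rw [hrecQ, hrecP, cfD_rec hirr h0 h1]
    have e1 : ((pq α k : ℝ) * cfQ α (k+1) + cfQ α k) * α - ((pq α k : ℝ) * cfP α (k+1) + cfP α k)
        = (pq α k : ℝ) * ((cfQ α (k+1) : ℝ) * α - cfP α (k+1)) + ((cfQ α k : ℝ) * α - cfP α k) := by ring
    rw [e1, ih2, ih1]
    ring


lemma cfQ_nonneg (hirr : Irrational α) (h0 : 0 < α) (h1 : α < 1) : ∀ k, 0 ≤ cfQ α k := by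
  intro k
  induction k using Nat.twoStepInduction with
  | zero => simp [cfQ]
  | one => simp [cfQ]
  | more k ih1 ih2 =>
    have hpq := pq_ge_one hirr h0 h1 k
    show 0 ≤ pq α k * cfQ α (k+1) + cfQ α k
    nlinarith

lemma cfQ_pos (hirr : Irrational α) (h0 : 0 < α) (h1 : α < 1) : ∀ k, 1 ≤ cfQ α (k+1) := by
  intro k
  induction k using Nat.twoStepInduction with
  | zero => simp [cfQ]
  | one =>
    have hpq := pq_ge_one hirr h0 h1 0
    show 1 ≤ pq α 0 * cfQ α 1 + cfQ α 0
    simp [cfQ]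
    omega
  | more k ih1 ih2 =>
    have hpq := pq_ge_one hirr h0 h1 (k+1)
    have hnn := cfQ_nonneg hirr h0 h1 (k+1)
    show 1 ≤ pq α (k+1) * cfQ α (k+2) + cfQ α (k+1)
    nlinarith

lemma cfQ_ge (hirr : Irrational α) (h0 : 0 < α) (h1 : α < 1) : ∀ k : ℕ, (k : ℤ) ≤ cfQ α (k+1) := by
  intro k
  induction k using Nat.twoStepInduction with
  | zero => simp [cfQ]
  | one =>
    have hpq := pq_ge_one hirr h0 h1 0
    show (1:ℤ) ≤ pq α 0 * cfQ α 1 + cfQ α 0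
    simp [cfQ]
    omega
  | more k ih1 ih2 =>
    have hpq := pq_ge_one hirr h0 h1 (k+1)
    have h2 := cfQ_pos hirr h0 h1 k
    have h3 := cfQ_nonneg hirr h0 h1 (k+2)
    show ((k:ℤ)+2) ≤ pq α (k+1) * cfQ α (k+2) + cfQ α (k+1)
    have : (k+1 : ℤ) ≤ cfQ α (k+2) := by exact_mod_cast ih2
    nlinarith

lemma cf_invariant (hirr : Irrational α) (h0 : 0 < α) (h1 : α < 1) :
    ∀ k, (cfQ α (k+1) : ℝ) * cfD α k + (cfQ α k : ℝ) * cfD α (k+1) = 1 := by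
  intro k
  induction k with
  | zero => simp [cfQ, cfD_zero]
  | succ k ih =>
    have hrecQ : (cfQ α (k+2) : ℝ) = pq α k * cfQ α (k+1) + cfQ α k := by
      rw [show cfQ α (k+2) = pq α k * cfQ α (k+1) + cfQ α k from rfl]; push_cast; ring
    rw [hrecQ, cfD_rec hirr h0 h1 k]
    linear_combination ih

lemma exists_good_approx (hirr : Irrational α) (h0 : 0 < α) (h1 : α < 1)
    (hub : ¬ BoundedPQ α) (n : ℕ) :
    ∃ (Q : ℕ) (P : ℤ), n < Q ∧ (Q:ℝ) * |(Q:ℝ) * α - P| ≤ 1/(n+1) ∧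
      |(Q:ℝ) * α - P| ≤ 1/(n+1) := by
  rw [BoundedPQ] at hub
  push_neg at hub
  obtain ⟨k, hk⟩ := hub (max (n:ℤ)
    ((Finset.range (n+1)).sup' (Finset.nonempty_range_iff.mpr (Nat.succ_ne_zero n)) (pq α)))
  have han : (n:ℤ) < pq α k := lt_of_le_of_lt (le_max_left _ _) hk
  have hkn : n + 1 ≤ k := by
    by_contra hc
    push_neg at hc
    have hmem : k ∈ Finset.range (n+1) := Finset.mem_range.mpr hc
    have := Finset.le_sup' (pq α) hmem
    exact absurd (le_trans this (le_max_right _ _)) (not_le.mpr hk)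
  set Qz : ℤ := cfQ α (k+1) with hQz
  set P : ℤ := cfP α (k+1) with hP
  have hQz1 : 1 ≤ Qz := cfQ_pos hirr h0 h1 k
  have hQk : (k:ℤ) ≤ Qz := cfQ_ge hirr h0 h1 k
  refine ⟨Qz.toNat, P, ?_, ?_, ?_⟩
  · have hkz : ((n:ℤ))+1 ≤ (k:ℤ) := by exact_mod_cast hkn
    have : (n:ℤ) < Qz := by omega
    exact Int.lt_toNat.mpr this
  all_goals {
    have hcast : ((Qz.toNat : ℕ) : ℝ) = (Qz : ℝ) := by
      rw [← Int.cast_natCast, Int.toNat_of_nonneg (by linarith)]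
    rw [hcast]
    have habs : |(Qz:ℝ) * α - P| = cfD α (k+1) := by
      rw [hQz, hP, cfE hirr h0 h1 (k+1)]
      rw [abs_mul, abs_pow, abs_neg, abs_one, one_pow, one_mul,
        abs_of_pos (cfD_pos hirr h0 h1 (k+1))]
    rw [habs]
    have hDpos1 := cfD_pos hirr h0 h1 (k+1)
    have hDpos0 := cfD_pos hirr h0 h1 k
    have hQD : (Qz:ℝ) * cfD α k ≤ 1 := by
      have hinv := cf_invariant hirr h0 h1 k
      have hq0 : (0:ℝ) ≤ (cfQ α k : ℝ) := by exact_mod_cast cfQ_nonneg hirr h0 h1 k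
      nlinarith
    have hbk : betaSeq α k ≤ 1/((n:ℝ)+1) := by
      have hfl : (pq α k : ℝ) ≤ (betaSeq α k)⁻¹ := by
        rw [pq_eq]; exact Int.floor_le _
      have hbpos := (beta_props hirr h0 h1 k).2.1
      have hpq_n : ((n:ℝ)+1) ≤ (pq α k : ℝ) := by
        have : (n:ℤ)+1 ≤ pq α k := by omega
        exact_mod_cast this
      have hbinv : ((n:ℝ)+1) ≤ (betaSeq α k)⁻¹ := le_trans hpq_n hfl
      rw [le_div_iff₀ (by positivity)]
      have hmul : betaSeq α k * (betaSeq α k)⁻¹ = 1 := mul_inv_cancel₀ (ne_of_gt hbpos)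
      nlinarith [mul_le_mul_of_nonneg_left hbinv hbpos.le]
    have hD1 : cfD α (k+1) = cfD α k * betaSeq α k := cfD_succ k
    have hn1 : (0:ℝ) < (n:ℝ)+1 := by positivity
    have hQzR : (1:ℝ) ≤ (Qz:ℝ) := by exact_mod_cast hQz1
    have hbpos := (beta_props hirr h0 h1 k).2.1
    have hDk1 : cfD α k ≤ 1 := by nlinarith
    rw [hD1]
    nlinarith [mul_le_mul_of_nonneg_right hQD hbpos.le,
      mul_le_mul_of_nonneg_right hDk1 hbpos.le, hbk] }




variable {d : ℕ} (α : ℝ) (pl pr : Equiv.Perm (Fin d))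

def sqW : ℕ → ℝ → Equiv.Perm (Fin d)
  | 0, _ => 1
  | (n+1), x => stepP α pl pr (x + n * α) * sqW n x

lemma stepP_fract (y : ℝ) : stepP α pl pr (Int.fract y) = stepP α pl pr y := by
  simp [stepP, Int.fract_fract]

lemma sqT_apply (z : ℝ × Fin d) :
    sqT d α pl pr z = (Int.fract (z.1 + α), stepP α pl pr z.1 z.2) := by
  simp [sqT, stepP, apply_ite (fun σ : Equiv.Perm (Fin d) => σ z.2)]

lemma sqT_iterate (n : ℕ) (x : ℝ) (hx : x ∈ Ico (0:ℝ) 1) (i : Fin d) :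
    (sqT d α pl pr)^[n] (x, i) = (Int.fract (x + n * α), sqW α pl pr n x i) := by
  induction n with
  | zero =>
    simp [sqW, Int.fract_eq_self.mpr ⟨hx.1, hx.2⟩]
  | succ n ih =>
    rw [Function.iterate_succ_apply', ih, sqT_apply]
    have h1 : Int.fract (Int.fract (x + n*α) + α) = Int.fract (x + ((n:ℕ)+1 : ℕ) * α) := by
      have e : Int.fract (x + n*α) + α = (x + (((n:ℕ)+1 : ℕ):ℝ)*α) + ((-⌊x + n*α⌋ : ℤ) : ℝ) := by
        rw [Int.fract]; push_cast; ring
      rw [e, Int.fract_add_intCast]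
    have h2 : stepP α pl pr (Int.fract (x + n*α)) = stepP α pl pr (x + n*α) :=
      stepP_fract α pl pr _
    simp only [h1, h2]
    refine Prod.ext rfl ?_
    simp [sqW, Equiv.Perm.mul_apply]

lemma sqW_congr (n : ℕ) (x y : ℝ)
    (h : ∀ k < n, stepP α pl pr (x + k*α) = stepP α pl pr (y + k*α)) :
    sqW α pl pr n x = sqW α pl pr n y := by
  induction n with
  | zero => rfl
  | succ n ih =>
    show stepP α pl pr (x + n * α) * sqW α pl pr n x
        = stepP α pl pr (y + n * α) * sqW α pl pr n y
    rw [h n (Nat.lt_succ_self n), ih (fun k hk => h k (Nat.lt_succ_of_lt hk))]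

lemma sqW_add (a b : ℕ) (x : ℝ) :
    sqW α pl pr (a+b) x = sqW α pl pr a (x + (b:ℝ)*α) * sqW α pl pr b x := by
  induction a with
  | zero => rw [Nat.zero_add]; show sqW α pl pr b x = 1 * sqW α pl pr b x; rw [one_mul]
  | succ a ih =>
    have e1 : (a+1)+b = (a+b)+1 := by omega
    rw [e1]
    show stepP α pl pr (x + ((a+b : ℕ):ℝ) * α) * sqW α pl pr (a+b) x = _
    rw [ih]
    show _ = stepP α pl pr ((x + (b:ℝ)*α) + ((a:ℕ):ℝ) * α) * sqW α pl pr a (x + (b:ℝ)*α)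
        * sqW α pl pr b x
    have e2 : x + ((a+b : ℕ):ℝ) * α = (x + (b:ℝ)*α) + ((a:ℕ):ℝ) * α := by push_cast; ring
    rw [e2, mul_assoc]

lemma sqW_pow (Q : ℕ) (x : ℝ) (m : ℕ)
    (h : ∀ j < m, sqW α pl pr Q (x + ((j*Q : ℕ):ℝ)*α) = sqW α pl pr Q x) :
    sqW α pl pr (m*Q) x = (sqW α pl pr Q x)^m := by
  induction m with
  | zero => rw [Nat.zero_mul, pow_zero]; rfl
  | succ m ih =>
    rw [show (m+1)*Q = Q + m*Q by ring, sqW_add, h m (Nat.lt_succ_self m),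
      ih (fun j hj => h j (Nat.lt_succ_of_lt hj)), pow_succ']

lemma prod_count_apply {d : ℕ} (ν : Measure ℝ) [SFinite ν] (s : Set (ℝ × Fin d))
    (hs : MeasurableSet s) :
    ν.prod Measure.count s = ∑ i : Fin d, ν {x | (x, i) ∈ s} := by
  have hm : ∀ i : Fin d, MeasurableSet {x : ℝ | (x, i) ∈ s} := fun i =>
    hs.preimage (measurable_id.prodMk measurable_const)
  have hdecomp : s = ⋃ i : Fin d, ({x | (x, i) ∈ s} ×ˢ ({i} : Set (Fin d))) := by
    ext ⟨x, i⟩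
    simp only [mem_iUnion, mem_prod, mem_setOf_eq, mem_singleton_iff]
    exact ⟨fun h => ⟨i, h, rfl⟩, fun ⟨i', h, hi⟩ => hi ▸ h⟩
  conv_lhs => rw [hdecomp]
  rw [measure_iUnion, tsum_fintype]
  · apply Finset.sum_congr rfl
    intro i _
    rw [Measure.prod_prod, Measure.count_singleton, mul_one]
  · intro i j hij
    rw [Function.onFun]
    apply Set.disjoint_left.mpr
    rintro ⟨x, i'⟩ hxi hxj
    exact hij (hxi.2.symm.trans hxj.2)
  · exact fun i => (hm i).prod (measurableSet_singleton i)


lemma measurable_sqT (d : ℕ) (α : ℝ) (pl pr : Equiv.Perm (Fin d)) :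
    Measurable (sqT d α pl pr) := by
  apply Measurable.prod
  · exact measurable_fract.comp (measurable_fst.add_const α)
  · apply Measurable.ite
    · exact (measurable_fract.comp measurable_fst) measurableSet_Iio
    · exact (Measurable.of_discrete (f := ⇑pl)).comp measurable_snd
    · exact (Measurable.of_discrete (f := ⇑pr)).comp measurable_snd

end STIE
end

/-- Proposition: a square-tiled interval exchange transformation with `α` irrational of
unbounded partial quotients and `(p_l,p_r)` acting transitively (so `T` minimal) is rigid. -/
theorem rigid_of_unbounded_partial_quotients
    (d : ℕ) (hd : 1 ≤ d) (α : ℝ) (hirr : Irrational α) (h0 : 0 < α) (h1 : α < 1)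
    (pl pr : Equiv.Perm (Fin d))
    (htrans : ∀ s : Set (Fin d), (∀ i ∈ s, pl i ∈ s) → (∀ i ∈ s, pr i ∈ s) →
      s = ∅ ∨ s = Set.univ)
    (hubpq : ¬ BoundedPQ α) :
    Rigid (muX d) (sqT d α pl pr) := by
  classical
  have hex := STIE.exists_good_approx hirr h0 h1 hubpq
  choose Q P hQgt hQb hPb using hex
  set m : ℕ := Nat.factorial d with hm
  have hm0 : 0 < m := Nat.factorial_pos d
  refine ⟨fun n => m * Q n, ?_, ?_⟩
  · exact tendsto_atTop_mono
      (fun n => le_trans (le_of_lt (hQgt n)) (Nat.le_mul_of_pos_left _ hm0)) tendsto_id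
  intro A hA
  set T := sqT d α pl pr with hT
  have hTmeas : Measurable T := STIE.measurable_sqT d α pl pr
  set Ai : Fin d → Set ℝ := fun i => {x | (x, i) ∈ A} with hAi_def
  have hAi : ∀ i, MeasurableSet (Ai i) := fun i =>
    hA.preimage (measurable_id.prodMk measurable_const)
  set t : ℕ → ℝ := fun n => ((m * Q n : ℕ) : ℝ) * α with ht_def
  set δ : ℕ → ℝ := fun n => |(Q n : ℝ) * α - P n| with hd_def
  have hδ0 : ∀ n, 0 ≤ δ n := fun n => abs_nonneg _
  set Rot : ℕ → Fin d → Set ℝ :=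
    fun n i => ({x | Int.fract (x + t n) ∈ Ai i}) ∆ (Ai i) with hRot
  set Bad : ℕ → Set ℝ := fun n => ⋃ j ∈ Finset.range m, ⋃ k ∈ Finset.range (Q n),
    {x : ℝ | STIE.stepP α pl pr (x + (k:ℝ)*α + ((j*(Q n) : ℕ):ℝ)*α)
      ≠ STIE.stepP α pl pr (x + (k:ℝ)*α)} with hBad_def
  -- measure bound on the bad sets
  have hBadB : ∀ n, volume.restrict (Ico (0:ℝ) 1) (Bad n)
      ≤ ENNReal.ofReal ((4 * m * m) * (1/(n+1))) := by
    intro n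
    have hjk : ∀ j k : ℕ, j < m →
        volume.restrict (Ico (0:ℝ) 1)
          {x : ℝ | STIE.stepP α pl pr (x + (k:ℝ)*α + ((j*(Q n) : ℕ):ℝ)*α)
            ≠ STIE.stepP α pl pr (x + (k:ℝ)*α)}
        ≤ ENNReal.ofReal (4 * ((m:ℝ) * δ n)) := by
      intro j k hj
      apply STIE.step_bad_bound α pl pr ((k:ℝ)*α) _ ((m:ℝ) * δ n) ((j:ℤ) * P n)
        (by positivity)
      have e : (((j*(Q n) : ℕ):ℝ))*α - (((j:ℤ) * P n : ℤ):ℝ)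
          = (j:ℝ) * ((Q n:ℝ)*α - P n) := by push_cast; ring
      rw [e, abs_mul, abs_of_nonneg (by positivity : (0:ℝ) ≤ (j:ℝ))]
      have hjm : (j:ℝ) ≤ (m:ℝ) := by exact_mod_cast hj.le
      exact mul_le_mul_of_nonneg_right hjm (hδ0 n)
    rw [hBad_def]
    refine le_trans (measure_biUnion_finset_le _ _) ?_
    refine le_trans (Finset.sum_le_sum (fun j _ => measure_biUnion_finset_le _ _)) ?_
    refine le_trans (Finset.sum_le_sum (fun j hj => Finset.sum_le_sum
      (fun k _ => hjk j k (Finset.mem_range.mp hj)))) ?_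
    simp only [Finset.sum_const, Finset.card_range, smul_smul]
    rw [nsmul_eq_mul]
    rw [show ((m * Q n : ℕ):ℝ≥0∞) = ENNReal.ofReal ((m * Q n : ℕ):ℝ) from
      (ENNReal.ofReal_natCast _).symm, ← ENNReal.ofReal_mul (by positivity)]
    apply ENNReal.ofReal_le_ofReal
    have hmm : (0:ℝ) ≤ 4*(m:ℝ)*(m:ℝ) := by positivity
    have hq := mul_le_mul_of_nonneg_left (hQb n) hmm
    push_cast
    nlinarith [hδ0 n]
  -- on good points the iterate is a pure rotation
  have hgood : ∀ n, ∀ x ∈ Ico (0:ℝ) 1, x ∉ Bad n → ∀ i : Fin d,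
      T^[m * Q n] (x, i) = (Int.fract (x + t n), i) := by
    intro n x hx hxB i
    rw [hT, STIE.sqT_iterate α pl pr (m * Q n) x hx i]
    have hW : STIE.sqW α pl pr (m * Q n) x = 1 := by
      rw [STIE.sqW_pow α pl pr (Q n) x m ?_]
      · have hcard : Fintype.card (Equiv.Perm (Fin d)) = m := by
          rw [Fintype.card_perm, Fintype.card_fin]
        rw [← hcard]
        exact pow_card_eq_one
      · intro j hj
        apply STIE.sqW_congr
        intro k hk
        have hnotin : x ∉ {x : ℝ | STIE.stepP α pl pr (x + (k:ℝ)*α + ((j*(Q n) : ℕ):ℝ)*α)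
            ≠ STIE.stepP α pl pr (x + (k:ℝ)*α)} := by
          intro hmem
          apply hxB
          rw [hBad_def]
          exact mem_iUnion₂.mpr ⟨j, Finset.mem_range.mpr hj,
            mem_iUnion₂.mpr ⟨k, Finset.mem_range.mpr hk, hmem⟩⟩
        have heq := not_ne_iff.mp hnotin
        rw [show (x + ((j*(Q n) : ℕ):ℝ)*α) + (k:ℝ)*α
          = x + (k:ℝ)*α + ((j*(Q n) : ℕ):ℝ)*α from by ring]
        exact heq
    rw [hW]
    rfl
  -- convergence of the rotation parameters on the circle
  have hubnd : ∀ n : ℕ, ‖t n - ((m * P n : ℤ):ℝ)‖ ≤ (m:ℝ) * (1/(n+1)) := by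
    intro n
    rw [Real.norm_eq_abs]
    have e : t n - ((m * P n : ℤ):ℝ) = (m:ℝ) * ((Q n:ℝ)*α - P n) := by
      rw [ht_def]; push_cast; ring
    rw [e, abs_mul, abs_of_nonneg (by positivity : (0:ℝ) ≤ (m:ℝ))]
    exact mul_le_mul_of_nonneg_left (hPb n) (by positivity)
  have hlim : Tendsto (fun n : ℕ => (m:ℝ) * (1/(n+1))) atTop (nhds 0) := by
    simpa using tendsto_one_div_add_atTop_nhds_zero_nat.const_mul (m:ℝ)
  have hu : Tendsto (fun n => t n - ((m * P n : ℤ):ℝ)) atTop (nhds 0) :=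
    squeeze_zero_norm hubnd hlim
  have hpct : Tendsto (fun n => STIE.pc (t n)) atTop (nhds 0) := by
    have hcont : Continuous (fun y : ℝ => STIE.pc y) := continuous_quotient_mk'
    have h2 : Tendsto (fun n => STIE.pc (t n - ((m * P n : ℤ):ℝ))) atTop (nhds (STIE.pc 0)) :=
      (hcont.tendsto 0).comp hu
    have h3 : ∀ n, STIE.pc (t n - ((m * P n : ℤ):ℝ)) = STIE.pc (t n) := by
      intro n
      have e : t n - ((m * P n : ℤ):ℝ) = t n + ((-(m * P n) : ℤ):ℝ) := by push_cast; ring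
      rw [e, STIE.pc_add, STIE.coe_int_eq_zero, add_zero]
    have h4 := h2.congr h3
    simpa using h4
  -- the measure of each fibre of the bad set, per n bound
  have key : ∀ n, muX d (((T^[m * Q n]) ⁻¹' A) ∆ A)
      ≤ ENNReal.ofReal ((d:ℝ) * ((4*m*m) * (1/(n+1))))
        + ∑ i : Fin d, volume.restrict (Ico (0:ℝ) 1) (Rot n i) := by
    intro n
    have hiter : Measurable (T^[m * Q n]) := hTmeas.iterate _
    have hSmeas : MeasurableSet (((T^[m * Q n]) ⁻¹' A) ∆ A) := (hA.preimage hiter).symmDiff hA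
    have h1 : muX d (((T^[m * Q n]) ⁻¹' A) ∆ A)
        ≤ ((volume.restrict (Ico (0:ℝ) 1)).prod Measure.count) (((T^[m * Q n]) ⁻¹' A) ∆ A) := by
      rw [muX, Measure.smul_apply, smul_eq_mul]
      refine mul_le_of_le_one_left zero_le ?_
      refine ENNReal.inv_le_one.mpr ?_
      exact_mod_cast hd
    have h2 := STIE.prod_count_apply (volume.restrict (Ico (0:ℝ) 1)) _ hSmeas
    have h3 : ∀ i : Fin d,
        volume.restrict (Ico (0:ℝ) 1) {x | (x, i) ∈ ((T^[m * Q n]) ⁻¹' A) ∆ A}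
        ≤ volume.restrict (Ico (0:ℝ) 1) (Bad n) + volume.restrict (Ico (0:ℝ) 1) (Rot n i) := by
      intro i
      rw [Measure.restrict_apply' measurableSet_Ico, Measure.restrict_apply' measurableSet_Ico,
        Measure.restrict_apply' measurableSet_Ico]
      refine le_trans (measure_mono ?_) (le_trans (measure_union_le _ _) (le_refl _))
      rintro x ⟨hxS, hxI⟩
      by_cases hxB : x ∈ Bad n
      · exact Or.inl ⟨hxB, hxI⟩
      · refine Or.inr ⟨?_, hxI⟩
        have hg := hgood n x hxI hxB i
        have hmem : (x, i) ∈ (T^[m * Q n]) ⁻¹' A ↔ Int.fract (x + t n) ∈ Ai i := by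
          rw [mem_preimage, hg]; exact Iff.rfl
        simp only [mem_setOf_eq, Set.mem_symmDiff] at hxS
        simp only [hRot, Set.mem_symmDiff, mem_setOf_eq]
        rcases hxS with ⟨hp, hq⟩ | ⟨hp, hq⟩
        · exact Or.inl ⟨hmem.mp hp, hq⟩
        · exact Or.inr ⟨hp, fun hc => hq (hmem.mpr hc)⟩
    calc muX d (((T^[m * Q n]) ⁻¹' A) ∆ A)
        ≤ ((volume.restrict (Ico (0:ℝ) 1)).prod Measure.count) (((T^[m * Q n]) ⁻¹' A) ∆ A) := h1
      _ = ∑ i : Fin d, volume.restrict (Ico (0:ℝ) 1) {x | (x, i) ∈ ((T^[m * Q n]) ⁻¹' A) ∆ A} := h2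
      _ ≤ ∑ i : Fin d, (volume.restrict (Ico (0:ℝ) 1) (Bad n)
            + volume.restrict (Ico (0:ℝ) 1) (Rot n i)) :=
          Finset.sum_le_sum (fun i _ => h3 i)
      _ = d • volume.restrict (Ico (0:ℝ) 1) (Bad n)
            + ∑ i : Fin d, volume.restrict (Ico (0:ℝ) 1) (Rot n i) := by
          rw [Finset.sum_add_distrib, Finset.sum_const, Finset.card_univ, Fintype.card_fin]
      _ ≤ ENNReal.ofReal ((d:ℝ) * ((4*m*m) * (1/(n+1))))
            + ∑ i : Fin d, volume.restrict (Ico (0:ℝ) 1) (Rot n i) := by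
          refine add_le_add_left ?_ _
          rw [nsmul_eq_mul]
          refine le_trans (mul_le_mul_right (hBadB n) _) ?_
          rw [show ((d : ℕ):ℝ≥0∞) = ENNReal.ofReal ((d : ℕ):ℝ) from
            (ENNReal.ofReal_natCast _).symm, ← ENNReal.ofReal_mul (by positivity)]
  -- conclusion
  have hC : Tendsto (fun n : ℕ => ENNReal.ofReal ((d:ℝ) * ((4*m*m) * (1/(n+1)))))
      atTop (nhds 0) := by
    have hr : Tendsto (fun n : ℕ => (d:ℝ) * ((4*m*m) * (1/(n+1)))) atTop (nhds 0) := by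
      have h := (tendsto_one_div_add_atTop_nhds_zero_nat.const_mul ((4:ℝ)*m*m)).const_mul (d:ℝ)
      simpa using h
    simpa using ENNReal.tendsto_ofReal hr
  have hRtend : Tendsto (fun n => ∑ i : Fin d, volume.restrict (Ico (0:ℝ) 1) (Rot n i))
      atTop (nhds 0) := by
    have h := tendsto_finset_sum (Finset.univ : Finset (Fin d))
      (fun i _ => STIE.rot_tendsto (Ai i) (hAi i) t hpct)
    simpa [hRot] using h
  refine tendsto_of_tendsto_of_tendsto_of_le_of_le tendsto_const_nhds ?_ (fun n => zero_le) key
  simpa using hC.add hRtend
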